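/- arXiv:1209.1648 — 2 statements merged into one kernel-verified Lean document; each statement's English description precedes it below -/
import Mathlib

section
/- Every discretized solution x^{ε,τ} with initial datum x₀ satisfies the uniform dissipation bound Diss_Ψ(x^{ε,τ};[0,T]) ≤ E(0,x₀)·e^{λT}, which is independent of ε and τ. -/
open Filter MeasureTheory Set
open scoped Topology NNReal

section Setup

variable {X : Type*} [NormedAddCommGroup X] [NormedSpace ℝ X]

/-- The set of partition sums defining the `Ψ`-dissipation of `u` on `[a,b]`:
sums `∑ Ψ(u(s_i) − u(s_{i−1}))` over finite strictly increasing partitions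
`a = s₀ < s₁ < ⋯ < s_n = b`. -/
def dissSums (Ψ : X → ℝ) (u : ℝ → X) (a b : ℝ) : Set ℝ :=
  { S | ∃ (n : ℕ) (σ : Fin (n + 1) → ℝ), StrictMono σ ∧ σ 0 = a ∧ σ (Fin.last n) = b ∧
      S = ∑ i : Fin n, Ψ (u (σ i.succ) - u (σ i.castSucc)) }

/-- The `Ψ`-dissipation `Diss_Ψ(u;[a,b])`. -/
noncomputable def dissTV (Ψ : X → ℝ) (u : ℝ → X) (a b : ℝ) : ℝ :=
  sSup (dissSums Ψ u a b)

/-- The subdifferential `∂Ψ(0) = {η : ⟨η,v⟩ ≤ Ψ(v) for all v}`. -/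
def subdiffZero (Ψ : X → ℝ) : Set (X →L[ℝ] ℝ) :=
  { η | ∀ v, η v ≤ Ψ v }

/-- `inf_{η ∈ ∂Ψ(0)} ‖ξ + η‖_*`, where `‖·‖_*` is the dual (operator) norm. -/
noncomputable def distToSubdiff (Ψ : X → ℝ) (ξ : X →L[ℝ] ℝ) : ℝ :=
  sInf ((fun η => ‖ξ + η‖) '' subdiffZero Ψ)

/-- The cost `Δ_new(t;a,b)`: infimum over Lipschitz paths `γ : [0,1] → X` with
`γ(0)=a`, `γ(1)=b` of `∫₀¹ Ψ(γ'(s)) + (inf_{z∈∂Ψ(0)} ‖D_xE(t,γ(s))+z‖_*)·‖γ'(s)‖ ds`. -/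
noncomputable def deltaNew (DE : ℝ → X → X →L[ℝ] ℝ) (Ψ : X → ℝ) (t : ℝ) (a b : X) : ℝ :=
  sInf { c | ∃ (K : ℝ≥0) (γ : ℝ → X), LipschitzOnWith K γ (Icc 0 1) ∧ γ 0 = a ∧ γ 1 = b ∧
      c = ∫ s in (0:ℝ)..1, (Ψ (deriv γ s) + distToSubdiff Ψ (DE t (γ s)) * ‖deriv γ s‖) }

/-- The new dissipation `Diss_new(u;[t₁,t₂])`, with prescribed one-sided limit
functions `uL`, `uR`, summing over the jump set the corrections `Δ_new − Ψ`. -/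
noncomputable def dissNew (DE : ℝ → X → X →L[ℝ] ℝ) (Ψ : X → ℝ)
    (u uL uR : ℝ → X) (t₁ t₂ : ℝ) : ℝ :=
  dissTV Ψ u t₁ t₂
    + ∑' t : ({ s | ¬ ContinuousAt u s } ∩ Ioo t₁ t₂ : Set ℝ),
        (deltaNew DE Ψ (t : ℝ) (uL (t : ℝ)) (u (t : ℝ)) +
          deltaNew DE Ψ (t : ℝ) (u (t : ℝ)) (uR (t : ℝ))
          - Ψ (u (t : ℝ) - uL (t : ℝ)) - Ψ (uR (t : ℝ) - u (t : ℝ)))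
    + (deltaNew DE Ψ t₁ (u t₁) (uR t₁) - Ψ (uR t₁ - u t₁))
    + (deltaNew DE Ψ t₂ (uL t₂) (u t₂) - Ψ (u t₂ - uL t₂))

/-- `pts` is a discretized solution with initial datum `x₀`, neighborhood size `ε`,
time-step `τ` and `N` steps: `pts 0 = x₀` and each `pts i` minimizes
`x ↦ E(iτ, x) + Ψ(x − pts (i−1))` over the closed ball of radius `ε` around `pts (i−1)`. -/
def IsDiscreteSol (E : ℝ → X → ℝ) (Ψ : X → ℝ) (x₀ : X) (ε τ : ℝ) (N : ℕ)
    (pts : ℕ → X) : Prop :=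
  pts 0 = x₀ ∧ ∀ i : ℕ, 1 ≤ i → i ≤ N →
    ‖pts i - pts (i - 1)‖ ≤ ε ∧
    ∀ x : X, ‖x - pts (i - 1)‖ ≤ ε →
      E ((i : ℝ) * τ) (pts i) + Ψ (pts i - pts (i - 1)) ≤
        E ((i : ℝ) * τ) x + Ψ (x - pts (i - 1))

/-- The piecewise-constant interpolant `x^{ε,τ}`: equal to `pts (i−1)` on
`[(i−1)τ, iτ)` for `i = 1,…,N`, and to `pts N` on `[Nτ, T]`. -/
noncomputable def discInterp (pts : ℕ → X) (τ : ℝ) (N : ℕ) (t : ℝ) : X :=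
  pts (min N ⌊t / τ⌋₊)

end Setup

section MyHelpers

variable {X : Type*} [NormedAddCommGroup X] [NormedSpace ℝ X]

lemma myPsi_zero (Ψ : X → ℝ)
    (hΨhom : ∀ c : ℝ, 0 ≤ c → ∀ v : X, Ψ (c • v) = c * Ψ v) : Ψ 0 = 0 := by
  have := hΨhom 0 le_rfl 0
  simpa using this

lemma myPsi_subadd (Ψ : X → ℝ) (hΨconv : ConvexOn ℝ Set.univ Ψ)
    (hΨhom : ∀ c : ℝ, 0 ≤ c → ∀ v : X, Ψ (c • v) = c * Ψ v) (a b : X) :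
    Ψ (a + b) ≤ Ψ a + Ψ b := by
  have h := hΨconv.2 (Set.mem_univ a) (Set.mem_univ b)
    (by norm_num : (0:ℝ) ≤ 1/2) (by norm_num : (0:ℝ) ≤ 1/2) (by norm_num)
  have h2 : Ψ (a + b) = 2 * Ψ ((1/2 : ℝ) • a + (1/2 : ℝ) • b) := by
    rw [← hΨhom 2 (by norm_num)]
    congr 1
    module
  rw [h2]
  rw [smul_eq_mul, smul_eq_mul] at h
  linarith

lemma myPsi_telescope (Ψ : X → ℝ) (hΨconv : ConvexOn ℝ Set.univ Ψ)
    (hΨhom : ∀ c : ℝ, 0 ≤ c → ∀ v : X, Ψ (c • v) = c * Ψ v) (pts : ℕ → X) :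
    ∀ a b : ℕ, a ≤ b →
      Ψ (pts b - pts a) ≤ ∑ j ∈ Finset.Ico a b, Ψ (pts (j+1) - pts j) := by
  intro a b hab
  induction b, hab using Nat.le_induction with
  | base => simp [myPsi_zero Ψ hΨhom]
  | succ b hab ih =>
    have hsplit : pts (b+1) - pts a = (pts (b+1) - pts b) + (pts b - pts a) := by abel
    rw [Finset.sum_Ico_succ_top hab, hsplit]
    have := myPsi_subadd Ψ hΨconv hΨhom (pts (b+1) - pts b) (pts b - pts a)
    linarith

lemma myPsi_partition (Ψ : X → ℝ) (hΨconv : ConvexOn ℝ Set.univ Ψ)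
    (hΨhom : ∀ c : ℝ, 0 ≤ c → ∀ v : X, Ψ (c • v) = c * Ψ v) (pts : ℕ → X)
    (m : ℕ → ℕ) (hm : Monotone m) :
    ∀ n : ℕ, ∑ i ∈ Finset.range n, Ψ (pts (m (i+1)) - pts (m i)) ≤
      ∑ j ∈ Finset.Ico (m 0) (m n), Ψ (pts (j+1) - pts j) := by
  intro n
  induction n with
  | zero => simp
  | succ n ih =>
    rw [Finset.sum_range_succ,
      ← Finset.sum_Ico_consecutive _ (hm (Nat.zero_le n)) (hm (Nat.le_succ n))]
    exact add_le_add ih (myPsi_telescope Ψ hΨconv hΨhom pts (m n) (m (n+1)) (hm (Nat.le_succ n)))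

lemma myGronwall (T : ℝ) (E Et : ℝ → X → ℝ)
    (hEt : ∀ x : X, ∀ t ∈ Set.Icc (0:ℝ) T,
      HasDerivWithinAt (fun s => E s x) (Et t x) (Set.Icc 0 T) t)
    (lam : ℝ)
    (hEbound : ∀ s ∈ Set.Icc (0:ℝ) T, ∀ x : X, |Et s x| ≤ lam * E s x)
    (x : X) {a b : ℝ} (ha : a ∈ Set.Icc (0:ℝ) T) (hb : b ∈ Set.Icc (0:ℝ) T) (hab : a ≤ b) :
    E b x ≤ E a x * Real.exp (lam * (b - a)) := by
  set g : ℝ → ℝ := fun s => E s x * Real.exp (-lam * s) with hg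
  have hfc : ContinuousOn (fun s => E s x) (Set.Icc 0 T) :=
    fun t ht => (hEt x t ht).continuousWithinAt
  have hgc : ContinuousOn g (Set.Icc 0 T) :=
    hfc.mul ((Real.continuous_exp.comp (continuous_const.mul continuous_id)).continuousOn)
  have hderiv : ∀ s ∈ interior (Set.Icc (0:ℝ) T),
      HasDerivAt g ((Et s x - lam * E s x) * Real.exp (-lam * s)) s := by
    intro s hs
    rw [interior_Icc] at hs
    have hmem : Set.Icc (0:ℝ) T ∈ nhds s := Icc_mem_nhds hs.1 hs.2
    have h1 : HasDerivAt (fun s => E s x) (Et s x) s :=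
      (hEt x s (Set.Ioo_subset_Icc_self hs)).hasDerivAt hmem
    have h2 : HasDerivAt (fun s : ℝ => Real.exp (-lam * s)) (-lam * Real.exp (-lam * s)) s := by
      have h0 : HasDerivAt (fun s : ℝ => -lam * s) (-lam) s := by simpa using (hasDerivAt_id s).const_mul (-lam)
      have := (Real.hasDerivAt_exp (-lam * s)).comp s h0
      have heq : (Real.exp ∘ fun s : ℝ => -lam * s) = fun s : ℝ => Real.exp (-lam * s) := rfl
      rw [heq] at this
      exact this.congr_deriv (by ring)
    have h3 := h1.mul h2
    exact h3.congr_deriv (by ring)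
  have hanti : AntitoneOn g (Set.Icc 0 T) := by
    apply antitoneOn_of_deriv_nonpos (convex_Icc 0 T) hgc
    · intro s hs
      exact (hderiv s hs).differentiableAt.differentiableWithinAt
    · intro s hs
      rw [(hderiv s hs).deriv]
      have hsT : s ∈ Set.Icc (0:ℝ) T := interior_subset hs
      have h1 : Et s x ≤ lam * E s x := (abs_le.mp (hEbound s hsT x)).2
      have h2 := (Real.exp_pos (-lam * s)).le
      nlinarith
  have hga : E b x * Real.exp (-lam * b) ≤ E a x * Real.exp (-lam * a) := hanti ha hb hab
  have h4 := mul_le_mul_of_nonneg_right hga (Real.exp_pos (lam * b)).le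
  calc E b x = E b x * Real.exp (-lam * b) * Real.exp (lam * b) := by
        rw [mul_assoc, ← Real.exp_add]; simp
    _ ≤ E a x * Real.exp (-lam * a) * Real.exp (lam * b) := h4
    _ = E a x * Real.exp (lam * (b - a)) := by
        rw [mul_assoc, ← Real.exp_add]; ring_nf

end MyHelpers

theorem stmt_4
    {X : Type*} [NormedAddCommGroup X] [NormedSpace ℝ X] [FiniteDimensional ℝ X]
    [Nontrivial X]
    (T : ℝ) (hT : 0 < T)
    (E Et : ℝ → X → ℝ) (DE : ℝ → X → X →L[ℝ] ℝ)
    (hEnn : ∀ t ∈ Set.Icc (0:ℝ) T, ∀ x : X, 0 ≤ E t x)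
    (hEt : ∀ x : X, ∀ t ∈ Set.Icc (0:ℝ) T,
      HasDerivWithinAt (fun s => E s x) (Et t x) (Set.Icc 0 T) t)
    (hDE : ∀ t ∈ Set.Icc (0:ℝ) T, ∀ x : X, HasFDerivAt (fun y => E t y) (DE t x) x)
    (hEtc : ContinuousOn (fun p : ℝ × X => Et p.1 p.2) (Set.Icc 0 T ×ˢ Set.univ))
    (hDEc : ContinuousOn (fun p : ℝ × X => DE p.1 p.2) (Set.Icc 0 T ×ˢ Set.univ))
    (lam : ℝ) (hlam : 0 ≤ lam)
    (hEbound : ∀ s ∈ Set.Icc (0:ℝ) T, ∀ x : X, |Et s x| ≤ lam * E s x)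
    (Ψ : X → ℝ) (hΨnn : ∀ v, 0 ≤ Ψ v) (hΨconv : ConvexOn ℝ Set.univ Ψ)
    (hΨhom : ∀ c : ℝ, 0 ≤ c → ∀ v : X, Ψ (c • v) = c * Ψ v)
    (hΨpos : ∀ v : X, v ≠ 0 → 0 < Ψ v)
    (x₀ : X) (ε τ : ℝ) (hε : 0 < ε) (hτ : 0 < τ)
    (N : ℕ) (hNT : (N : ℝ) * τ ≤ T ∧ T < ((N : ℝ) + 1) * τ)
    (pts : ℕ → X) (hsol : IsDiscreteSol E Ψ x₀ ε τ N pts) :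
    ∀ S ∈ dissSums Ψ (discInterp pts τ N) 0 T, S ≤ E 0 x₀ * Real.exp (lam * T) := by
  have hΨ0 : Ψ 0 = 0 := myPsi_zero Ψ hΨhom
  have hE0nn : 0 ≤ E 0 x₀ := hEnn 0 ⟨le_rfl, hT.le⟩ x₀
  -- time points in [0,T]
  have htmem : ∀ n : ℕ, n ≤ N → ((n : ℝ) * τ) ∈ Set.Icc (0:ℝ) T := by
    intro n hn
    constructor
    · positivity
    · calc (n : ℝ) * τ ≤ (N : ℝ) * τ := by
            apply mul_le_mul_of_nonneg_right _ hτ.le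
            exact_mod_cast hn
        _ ≤ T := hNT.1
  -- key energy estimate
  have key : ∀ n : ℕ, n ≤ N →
      ∑ j ∈ Finset.range n, Ψ (pts (j+1) - pts j) + E ((n : ℝ) * τ) (pts n)
        ≤ E 0 x₀ * Real.exp (lam * ((n : ℝ) * τ)) := by
    intro n hn
    induction n with
    | zero => simp [hsol.1]
    | succ n ih =>
      have hn' : n ≤ N := Nat.le_of_succ_le hn
      have ih' := ih hn'
      have hmin := (hsol.2 (n+1) (Nat.le_add_left 1 n) hn).2 (pts n)
        (by simp [hε.le])
      simp only [Nat.add_sub_cancel] at hmin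
      have hmin' : E (((n:ℕ)+1 : ℝ) * τ) (pts (n+1)) + Ψ (pts (n+1) - pts n)
          ≤ E (((n:ℕ)+1 : ℝ) * τ) (pts n) := by
        have := hmin
        push_cast at this ⊢
        simpa [hΨ0] using this
      have hb1 : ((n:ℝ)+1) * τ ∈ Set.Icc (0:ℝ) T := by
        have := htmem (n+1) hn
        push_cast at this
        exact this
      have hab1 : (n:ℝ) * τ ≤ ((n:ℝ)+1) * τ := by nlinarith [hτ.le]
      have hgr : E (((n:ℕ)+1 : ℝ) * τ) (pts n)
          ≤ E ((n : ℝ) * τ) (pts n) * Real.exp (lam * τ) := by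
        have h := myGronwall T E Et hEt lam hEbound (pts n) (htmem n hn') hb1 hab1
        have heq : lam * (((n:ℝ)+1) * τ - (n:ℝ) * τ) = lam * τ := by ring
        rwa [heq] at h
      have hsum_nn : 0 ≤ ∑ j ∈ Finset.range n, Ψ (pts (j+1) - pts j) :=
        Finset.sum_nonneg fun j _ => hΨnn _
      have hEnnn : 0 ≤ E ((n : ℝ) * τ) (pts n) := hEnn _ (htmem n hn') _
      have hexp1 : (1:ℝ) ≤ Real.exp (lam * τ) := by
        rw [← Real.exp_zero]
        exact Real.exp_le_exp.mpr (by positivity)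
      rw [Finset.sum_range_succ]
      have hcast : ((n+1 : ℕ) : ℝ) * τ = ((n:ℕ)+1 : ℝ) * τ := by push_cast; ring
      rw [hcast]
      have hfinal : ∑ j ∈ Finset.range n, Ψ (pts (j+1) - pts j)
            + E ((n : ℝ) * τ) (pts n) * Real.exp (lam * τ)
          ≤ E 0 x₀ * Real.exp (lam * ((n : ℝ) * τ)) * Real.exp (lam * τ) := by
        calc ∑ j ∈ Finset.range n, Ψ (pts (j+1) - pts j)
              + E ((n : ℝ) * τ) (pts n) * Real.exp (lam * τ)
            ≤ (∑ j ∈ Finset.range n, Ψ (pts (j+1) - pts j)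
              + E ((n : ℝ) * τ) (pts n)) * Real.exp (lam * τ) := by
              rw [add_mul]
              have := mul_le_mul_of_nonneg_left hexp1 hsum_nn
              linarith
          _ ≤ E 0 x₀ * Real.exp (lam * ((n : ℝ) * τ)) * Real.exp (lam * τ) :=
              mul_le_mul_of_nonneg_right ih' (Real.exp_pos _).le
      have hexpeq : Real.exp (lam * ((n : ℝ) * τ)) * Real.exp (lam * τ)
          = Real.exp (lam * (((n:ℕ)+1 : ℝ) * τ)) := by
        rw [← Real.exp_add]; ring_nf
      calc ∑ j ∈ Finset.range n, Ψ (pts (j+1) - pts j) + Ψ (pts (n+1) - pts n)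
            + E (((n:ℕ)+1 : ℝ) * τ) (pts (n+1))
          ≤ ∑ j ∈ Finset.range n, Ψ (pts (j+1) - pts j)
            + E (((n:ℕ)+1 : ℝ) * τ) (pts n) := by linarith
        _ ≤ ∑ j ∈ Finset.range n, Ψ (pts (j+1) - pts j)
            + E ((n : ℝ) * τ) (pts n) * Real.exp (lam * τ) := by linarith
        _ ≤ E 0 x₀ * Real.exp (lam * ((n : ℝ) * τ)) * Real.exp (lam * τ) := hfinal
        _ = E 0 x₀ * Real.exp (lam * (((n:ℕ)+1 : ℝ) * τ)) := by rw [mul_assoc, hexpeq]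
  -- total step bound
  have hstep : ∑ j ∈ Finset.range N, Ψ (pts (j+1) - pts j) ≤ E 0 x₀ * Real.exp (lam * T) := by
    have h1 := key N le_rfl
    have h2 : 0 ≤ E ((N : ℝ) * τ) (pts N) := hEnn _ (htmem N le_rfl) _
    have h3 : Real.exp (lam * ((N : ℝ) * τ)) ≤ Real.exp (lam * T) :=
      Real.exp_le_exp.mpr (mul_le_mul_of_nonneg_left hNT.1 hlam)
    have h4 := mul_le_mul_of_nonneg_left h3 hE0nn
    linarith
  -- the floor function
  set k : ℝ → ℕ := fun s => min N ⌊s / τ⌋₊ with hk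
  have hkmono : Monotone k := by
    intro s t hst
    exact min_le_min le_rfl (Nat.floor_mono (div_le_div_of_nonneg_right hst hτ.le))
  have hk0 : k 0 = 0 := by simp [hk]
  have hkT : k T = N := by
    have hfl : ⌊T / τ⌋₊ = N := by
      rw [Nat.floor_eq_iff (by positivity)]
      constructor
      · rw [le_div_iff₀ hτ]; exact hNT.1
      · rw [div_lt_iff₀ hτ]; exact_mod_cast hNT.2
    simp [hk, hfl]
  -- main argument
  rintro S ⟨n, σ, hσmono, hσ0, hσlast, hS⟩
  set m : ℕ → ℕ := fun j => k (σ ⟨min j n, by omega⟩) with hm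
  have hmmono : Monotone m := by
    intro i j hij
    exact hkmono (hσmono.monotone (by simp [Fin.le_def]; omega))
  have hm0 : m 0 = 0 := by
    have : (⟨min 0 n, by omega⟩ : Fin (n+1)) = 0 := by
      ext; simp
    rw [hm]; simp only [this, hσ0, hk0]
  have hmn : m n = N := by
    have : (⟨min n n, by omega⟩ : Fin (n+1)) = Fin.last n := by
      ext; simp
    rw [hm]; simp only [this, hσlast, hkT]
  have hSeq : S = ∑ i ∈ Finset.range n, Ψ (pts (m (i+1)) - pts (m i)) := by
    rw [hS, ← Fin.sum_univ_eq_sum_range (fun j => Ψ (pts (m (j+1)) - pts (m j))) n]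
    apply Finset.sum_congr rfl
    intro i _
    have hi := i.isLt
    have h1 : (⟨min ((i : ℕ)+1) n, by omega⟩ : Fin (n+1)) = i.succ := by
      ext; simp only [Fin.val_succ]; omega
    have h2 : (⟨min (i : ℕ) n, by omega⟩ : Fin (n+1)) = i.castSucc := by
      ext; simp only [Fin.coe_castSucc]; omega
    show Ψ (discInterp pts τ N (σ i.succ) - discInterp pts τ N (σ i.castSucc)) = _
    rw [hm]
    simp only [h1, h2]
    rfl
  have hpart := myPsi_partition Ψ hΨconv hΨhom pts m hmmono n
  rw [hm0, hmn] at hpart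
  rw [← Finset.range_eq_Ico] at hpart
  rw [hSeq]
  exact le_trans hpart hstep
end

section
/- Fix ε > 0, a sequence τ_n → 0⁺, discretized solutions x^{ε,τ_n} with common initial datum x₀, and suppose x^{ε,τ_n}(t) → x^ε(t) as n → ∞ for every t ∈ [0,T]. Then for all 0 ≤ s ≤ t ≤ T: E(t, x^ε(t)) − E(s, x^ε(s)) ≤ ∫_s^t ∂_t E(r, x^ε(r)) dr − Diss_Ψ(x^ε;[s,t]). -/
open Filter MeasureTheory Set
open scoped Topology NNReal

section AuxDefs

/-- clamp to `[0,T]` -/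
noncomputable def clampF (T r : ℝ) : ℝ := min (max r 0) T

/-- index of the step containing `r` -/
noncomputable def idxF (N : ℕ) (τ r : ℝ) : ℕ := min N ⌊r / τ⌋₊

end AuxDefs

section AuxLemmas

variable {X : Type*} [NormedAddCommGroup X] [NormedSpace ℝ X]

lemma psi_zero' {Ψ : X → ℝ} (hΨhom : ∀ c : ℝ, 0 ≤ c → ∀ v : X, Ψ (c • v) = c * Ψ v) :
    Ψ (0 : X) = 0 := by
  have := hΨhom 0 le_rfl 0
  simpa using this

lemma psi_subadd' {Ψ : X → ℝ} (hΨconv : ConvexOn ℝ Set.univ Ψ)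
    (hΨhom : ∀ c : ℝ, 0 ≤ c → ∀ v : X, Ψ (c • v) = c * Ψ v) (a b : X) :
    Ψ (a + b) ≤ Ψ a + Ψ b := by
  have h2 : a + b = (2:ℝ) • ((1/2 : ℝ) • a + (1/2 : ℝ) • b) := by
    rw [smul_add, smul_smul, smul_smul]; norm_num
  have hc := hΨconv.2 (Set.mem_univ a) (Set.mem_univ b) (by norm_num : (0:ℝ) ≤ 1/2)
    (by norm_num : (0:ℝ) ≤ 1/2) (by norm_num)
  rw [h2, hΨhom 2 (by norm_num)]
  simp only [smul_eq_mul] at hc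
  linarith

lemma psi_telescope' {Ψ : X → ℝ}
    (hsub : ∀ a b : X, Ψ (a + b) ≤ Ψ a + Ψ b) (hzero : Ψ (0:X) = 0)
    (x : ℕ → X) : ∀ a b : ℕ, a ≤ b →
    Ψ (x b - x a) ≤ ∑ i ∈ Finset.Ico a b, Ψ (x (i+1) - x i) := by
  intro a b hab
  induction b, hab using Nat.le_induction with
  | base => simp [hzero]
  | succ b hab ih =>
    rw [Finset.sum_Ico_succ_top hab, ← sub_add_sub_cancel (x (b+1)) (x b) (x a)]
    calc Ψ ((x (b+1) - x b) + (x b - x a)) ≤ Ψ (x (b+1) - x b) + Ψ (x b - x a) := hsub _ _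
    _ ≤ (∑ i ∈ Finset.Ico a b, Ψ (x (i+1) - x i)) + Ψ (x (b+1) - x b) := by linarith

lemma psi_merge' {Ψ : X → ℝ}
    (hsub : ∀ a b : X, Ψ (a + b) ≤ Ψ a + Ψ b) (hzero : Ψ (0:X) = 0)
    (x : ℕ → X) (g : ℕ → ℕ) (hg : Monotone g) :
    ∀ M : ℕ, ∑ j ∈ Finset.range M, Ψ (x (g (j+1)) - x (g j)) ≤
      ∑ i ∈ Finset.Ico (g 0) (g M), Ψ (x (i+1) - x i) := by
  intro M
  induction M with
  | zero => simp
  | succ M ih =>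
    rw [Finset.sum_range_succ,
      ← Finset.sum_Ico_consecutive _ (hg (Nat.zero_le M)) (hg (Nat.le_succ M))]
    exact add_le_add ih (psi_telescope' hsub hzero x _ _ (hg (Nat.le_succ M)))

lemma gron_aux' {f f' : ℝ → ℝ} {lam a b : ℝ} (hab : a ≤ b)
    (hc : ContinuousOn f (Set.Icc a b))
    (hd : ∀ r ∈ Set.Ico a b, HasDerivWithinAt f (f' r) (Set.Icc a b) r)
    (hnn : ∀ r ∈ Set.Icc a b, 0 ≤ f r)
    (hbd : ∀ r ∈ Set.Ico a b, |f' r| ≤ lam * f r) :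
    f b ≤ f a * Real.exp (lam * (b - a)) := by
  have key := norm_le_gronwallBound_of_norm_deriv_right_le (f := f) (f' := f') (δ := f a)
    (K := lam) (ε := 0) (a := a) (b := b) hc
    (fun r hr => (hd r hr).mono_of_mem_nhdsWithin (mem_nhdsWithin.2
      ⟨Set.Iio b, isOpen_Iio, hr.2, fun y hy => ⟨le_trans hr.1 hy.2, le_of_lt hy.1⟩⟩))
    (by rw [Real.norm_eq_abs, abs_of_nonneg (hnn a ⟨le_rfl, hab⟩)])
    (fun r hr => by
      rw [Real.norm_eq_abs, Real.norm_eq_abs, abs_of_nonneg (hnn r ⟨hr.1, le_of_lt hr.2⟩)]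
      simpa using hbd r hr)
    b ⟨hab, le_rfl⟩
  rw [Real.norm_eq_abs, abs_of_nonneg (hnn b ⟨hab, le_rfl⟩), gronwallBound_ε0] at key
  exact key

end AuxLemmas

theorem stmt_9
    {X : Type*} [NormedAddCommGroup X] [NormedSpace ℝ X] [FiniteDimensional ℝ X]
    [Nontrivial X]
    (T : ℝ) (hT : 0 < T)
    (E Et : ℝ → X → ℝ) (DE : ℝ → X → X →L[ℝ] ℝ)
    (hEnn : ∀ t ∈ Set.Icc (0:ℝ) T, ∀ x : X, 0 ≤ E t x)
    (hEt : ∀ x : X, ∀ t ∈ Set.Icc (0:ℝ) T,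
      HasDerivWithinAt (fun s => E s x) (Et t x) (Set.Icc 0 T) t)
    (hDE : ∀ t ∈ Set.Icc (0:ℝ) T, ∀ x : X, HasFDerivAt (fun y => E t y) (DE t x) x)
    (hEtc : ContinuousOn (fun p : ℝ × X => Et p.1 p.2) (Set.Icc 0 T ×ˢ Set.univ))
    (hDEc : ContinuousOn (fun p : ℝ × X => DE p.1 p.2) (Set.Icc 0 T ×ˢ Set.univ))
    (lam : ℝ) (hlam : 0 ≤ lam)
    (hEbound : ∀ s ∈ Set.Icc (0:ℝ) T, ∀ x : X, |Et s x| ≤ lam * E s x)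
    (Ψ : X → ℝ) (hΨnn : ∀ v, 0 ≤ Ψ v) (hΨconv : ConvexOn ℝ Set.univ Ψ)
    (hΨhom : ∀ c : ℝ, 0 ≤ c → ∀ v : X, Ψ (c • v) = c * Ψ v)
    (hΨpos : ∀ v : X, v ≠ 0 → 0 < Ψ v)
    (x₀ : X) (ε : ℝ) (hε : 0 < ε)
    (τ : ℕ → ℝ) (hτpos : ∀ n, 0 < τ n) (hτ0 : Filter.Tendsto τ Filter.atTop (nhds 0))
    (N : ℕ → ℕ) (hNT : ∀ n, (N n : ℝ) * τ n ≤ T ∧ T < ((N n : ℝ) + 1) * τ n)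
    (pts : ℕ → ℕ → X) (hsol : ∀ n, IsDiscreteSol E Ψ x₀ ε (τ n) (N n) (pts n))
    (xe : ℝ → X)
    (hconv : ∀ t ∈ Set.Icc (0:ℝ) T,
      Filter.Tendsto (fun n => discInterp (pts n) (τ n) (N n) t) Filter.atTop (nhds (xe t))) :
    ∀ s t : ℝ, 0 ≤ s → s ≤ t → t ≤ T →
      E t (xe t) - E s (xe s) ≤
        (∫ r in s..t, Et r (xe r)) - dissTV Ψ xe s t := by
  intro s t hs hst ht
  borelize X
  have hT0 : (0:ℝ) ≤ T := le_of_lt hT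
  have hsT : s ≤ T := le_trans hst ht
  have hΨ0 : Ψ (0:X) = 0 := psi_zero' hΨhom
  have hsub : ∀ a b : X, Ψ (a + b) ≤ Ψ a + Ψ b := psi_subadd' hΨconv hΨhom
  have hΨcont : Continuous Ψ := by rw [← continuousOn_univ]; exact hΨconv.continuousOn isOpen_univ
  -- clamp facts
  have hclmem : ∀ r, clampF T r ∈ Set.Icc (0:ℝ) T :=
    fun r => ⟨le_min (le_max_right r 0) hT0, min_le_right _ _⟩
  have hclid : ∀ r ∈ Set.Icc (0:ℝ) T, clampF T r = r := by
    intro r hr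
    rw [clampF, max_eq_left hr.1, min_eq_left hr.2]
  -- the clamped time-derivative
  set EtC : ℝ → X → ℝ := fun r x => Et (clampF T r) x with hEtCdef
  have hEtCcont : Continuous fun p : ℝ × X => EtC p.1 p.2 := by
    have hcl : Continuous (clampF T) := (continuous_id.max continuous_const).min continuous_const
    exact hEtc.comp_continuous (((hcl.comp continuous_fst)).prodMk continuous_snd)
      (fun p => ⟨hclmem p.1, Set.mem_univ _⟩)
  have hEtCeq : ∀ r ∈ Set.Icc (0:ℝ) T, ∀ x, EtC r x = Et r x := by
    intro r hr x
    simp only [hEtCdef]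
    rw [hclid r hr]
  -- continuity of Et in time, FTC, Gronwall
  have hEtxcont : ∀ x : X, ContinuousOn (fun r => Et r x) (Set.Icc 0 T) := fun x =>
    hEtc.comp (continuous_id.prodMk continuous_const).continuousOn
      (fun r hr => ⟨hr, Set.mem_univ _⟩)
  have hFTC : ∀ (x : X) (a b : ℝ), 0 ≤ a → a ≤ b → b ≤ T →
      (∫ r in a..b, Et r x) = E b x - E a x := by
    intro x a b ha hab hb
    have hss : Set.Icc a b ⊆ Set.Icc 0 T := Set.Icc_subset_Icc ha hb
    have hcont : ContinuousOn (fun r => E r x) (Set.Icc a b) :=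
      fun r hr => ((hEt x r (hss hr)).continuousWithinAt).mono hss
    refine intervalIntegral.integral_eq_sub_of_hasDeriv_right_of_le hab hcont ?_ ?_
    · intro r hr
      refine (hEt x r (hss ⟨le_of_lt hr.1, le_of_lt hr.2⟩)).mono_of_mem_nhdsWithin
        (mem_nhdsWithin.2 ⟨Set.Iio b, isOpen_Iio, hr.2, fun y hy =>
          ⟨le_trans ha (le_of_lt (lt_trans hr.1 hy.2)), le_trans (le_of_lt hy.1) hb⟩⟩)
    · exact ((hEtxcont x).mono hss).intervalIntegrable_of_Icc hab
  have hgronE : ∀ (x : X) (a b : ℝ), 0 ≤ a → a ≤ b → b ≤ T →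
      E b x ≤ E a x * Real.exp (lam * (b - a)) := by
    intro x a b ha hab hb
    have hss : Set.Icc a b ⊆ Set.Icc 0 T := Set.Icc_subset_Icc ha hb
    exact gron_aux' hab (fun r hr => ((hEt x r (hss hr)).continuousWithinAt).mono hss)
      (fun r hr => (hEt x r (hss ⟨hr.1, le_of_lt hr.2⟩)).mono hss)
      (fun r hr => hEnn r (hss hr) x)
      (fun r hr => hEbound r (hss ⟨hr.1, le_of_lt hr.2⟩) x)
  -- the interpolant and its index
  set Xd : ℕ → ℝ → X := fun n r => pts n (idxF (N n) (τ n) r) with hXdef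
  have hconv' : ∀ r ∈ Set.Icc (0:ℝ) T, Tendsto (fun n => Xd n r) atTop (𝓝 (xe r)) := by
    intro r hr
    simpa only [discInterp, idxF, hXdef] using hconv r hr
  have hidx_mono : ∀ n, Monotone (idxF (N n) (τ n)) := by
    intro n r r' h
    exact min_le_min le_rfl (Nat.floor_le_floor ((div_le_div_iff_of_pos_right (hτpos n)).mpr h))
  have hidx_leN : ∀ n r, idxF (N n) (τ n) r ≤ N n := fun n r => min_le_left _ _
  have hNτT : ∀ n, (N n : ℝ) * τ n ≤ T := fun n => (hNT n).1
  have hidx_mul_le : ∀ n r, 0 ≤ r → (idxF (N n) (τ n) r : ℝ) * τ n ≤ r := by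
    intro n r hr
    have h1 : ((idxF (N n) (τ n) r : ℕ) : ℝ) ≤ (⌊r / τ n⌋₊ : ℝ) := by
      exact_mod_cast min_le_right (N n) ⌊r / τ n⌋₊
    have h2 : (⌊r / τ n⌋₊ : ℝ) ≤ r / τ n := Nat.floor_le (div_nonneg hr (le_of_lt (hτpos n)))
    calc (idxF (N n) (τ n) r : ℝ) * τ n ≤ (⌊r / τ n⌋₊ : ℝ) * τ n :=
          mul_le_mul_of_nonneg_right h1 (le_of_lt (hτpos n))
    _ ≤ r := (le_div_iff₀ (hτpos n)).mp h2
  have hidx_ge : ∀ n (i : ℕ) (r : ℝ), i ≤ N n → (i:ℝ) * τ n ≤ r → i ≤ idxF (N n) (τ n) r := by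
    intro n i r hiN hir
    refine le_min hiN (Nat.le_floor ?_)
    rw [le_div_iff₀ (hτpos n)]
    exact hir
  have hidx_eq : ∀ n (r t' : ℝ), (idxF (N n) (τ n) t' : ℝ) * τ n ≤ r → r ≤ t' →
      idxF (N n) (τ n) r = idxF (N n) (τ n) t' :=
    fun n r t' h1 h2 => le_antisymm (hidx_mono n h2) (hidx_ge n _ r (hidx_leN n t') h1)
  have hidx_interior : ∀ n (j : ℕ), j + 1 ≤ N n → ∀ r : ℝ, (j:ℝ) * τ n < r →
      r < ((j:ℝ)+1) * τ n → idxF (N n) (τ n) r = j := by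
    intro n j hj r h1 h2
    have hr0 : (0:ℝ) ≤ r := le_of_lt (lt_of_le_of_lt (mul_nonneg (Nat.cast_nonneg j) (le_of_lt (hτpos n))) h1)
    have hfl : ⌊r / τ n⌋₊ = j := by
      rw [Nat.floor_eq_iff (div_nonneg hr0 (le_of_lt (hτpos n)))]
      exact ⟨le_of_lt ((lt_div_iff₀ (hτpos n)).mpr h1), (div_lt_iff₀ (hτpos n)).mpr (by linarith)⟩
    rw [idxF, hfl]
    exact min_eq_right (by omega)
  -- a-priori energy bounds
  have hE0nn : 0 ≤ E 0 x₀ := hEnn 0 ⟨le_rfl, hT0⟩ x₀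
  set C : ℝ := E 0 x₀ * Real.exp (lam * T) with hCdef
  have hB1 : ∀ n (i : ℕ), i ≤ N n →
      E ((i:ℝ) * τ n) (pts n i) ≤ E 0 x₀ * Real.exp (lam * ((i:ℝ) * τ n)) := by
    intro n i
    induction i with
    | zero => intro _; simp [(hsol n).1]
    | succ i ih =>
      intro hiN
      have hiN' : i ≤ N n := by omega
      have hτn := hτpos n
      have hcast : ((i+1:ℕ):ℝ) = (i:ℝ) + 1 := by push_cast; ring
      have h1T : ((i:ℝ)+1) * τ n ≤ T := by
        have hc : ((i:ℝ)+1) ≤ (N n : ℝ) := by exact_mod_cast hiN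
        calc ((i:ℝ)+1) * τ n ≤ (N n : ℝ) * τ n := mul_le_mul_of_nonneg_right hc (le_of_lt hτn)
        _ ≤ T := hNτT n
      have hmin := ((hsol n).2 (i+1) (by omega) hiN).2 (pts n i) (by simp [le_of_lt hε])
      simp only [Nat.add_sub_cancel, sub_self, hΨ0, add_zero] at hmin
      have hstep : E (((i+1:ℕ):ℝ) * τ n) (pts n (i+1)) ≤ E (((i+1:ℕ):ℝ) * τ n) (pts n i) := by
        have hnn := hΨnn (pts n (i+1) - pts n i)
        linarith
      have hgr := hgronE (pts n i) ((i:ℝ) * τ n) (((i:ℝ)+1) * τ n)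
        (mul_nonneg (Nat.cast_nonneg i) (le_of_lt hτn)) (by nlinarith) h1T
      calc E (((i+1:ℕ):ℝ) * τ n) (pts n (i+1)) ≤ E (((i+1:ℕ):ℝ) * τ n) (pts n i) := hstep
      _ = E (((i:ℝ)+1) * τ n) (pts n i) := by rw [hcast]
      _ ≤ E ((i:ℝ) * τ n) (pts n i) * Real.exp (lam * (((i:ℝ)+1) * τ n - (i:ℝ)*τ n)) := hgr
      _ ≤ (E 0 x₀ * Real.exp (lam * ((i:ℝ)*τ n))) *
            Real.exp (lam * (((i:ℝ)+1)*τ n - (i:ℝ)*τ n)) :=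
          mul_le_mul_of_nonneg_right (ih hiN') (le_of_lt (Real.exp_pos _))
      _ = E 0 x₀ * Real.exp (lam * (((i+1:ℕ):ℝ) * τ n)) := by
          rw [mul_assoc, ← Real.exp_add, hcast]; ring_nf
  have hB2 : ∀ n, ∀ r ∈ Set.Icc (0:ℝ) T, E r (Xd n r) ≤ C := by
    intro n r hr
    have hle : (idxF (N n) (τ n) r : ℝ) * τ n ≤ r := hidx_mul_le n r hr.1
    have h0 : (0:ℝ) ≤ (idxF (N n) (τ n) r : ℝ) * τ n :=
      mul_nonneg (Nat.cast_nonneg _) (le_of_lt (hτpos n))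
    have hgr := hgronE (pts n (idxF (N n) (τ n) r)) ((idxF (N n) (τ n) r : ℝ) * τ n) r h0 hle hr.2
    have hb1 := hB1 n (idxF (N n) (τ n) r) (hidx_leN n r)
    have hXeq : Xd n r = pts n (idxF (N n) (τ n) r) := by rw [hXdef]
    rw [hXeq]
    calc E r (pts n (idxF (N n) (τ n) r))
        ≤ E ((idxF (N n) (τ n) r : ℝ)*τ n) (pts n (idxF (N n) (τ n) r)) *
            Real.exp (lam * (r - (idxF (N n) (τ n) r : ℝ)*τ n)) := hgr
    _ ≤ (E 0 x₀ * Real.exp (lam * ((idxF (N n) (τ n) r : ℝ)*τ n))) *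
            Real.exp (lam * (r - (idxF (N n) (τ n) r : ℝ)*τ n)) :=
        mul_le_mul_of_nonneg_right hb1 (le_of_lt (Real.exp_pos _))
    _ = E 0 x₀ * Real.exp (lam * r) := by rw [mul_assoc, ← Real.exp_add]; ring_nf
    _ ≤ C := by
        rw [hCdef]
        exact mul_le_mul_of_nonneg_left
          (Real.exp_le_exp.mpr (mul_le_mul_of_nonneg_left hr.2 hlam)) hE0nn
  -- idx is invariant under clamping
  have hidx_cl : ∀ n r, idxF (N n) (τ n) (clampF T r) = idxF (N n) (τ n) r := by
    intro n r
    rcases le_or_gt r 0 with h0 | h0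
    · have h1 : clampF T r = 0 := by rw [clampF, max_eq_right h0]; exact min_eq_left hT0
      have hf2 : ⌊r / τ n⌋₊ = 0 := Nat.floor_eq_zero.mpr
        (lt_of_le_of_lt (div_nonpos_of_nonpos_of_nonneg h0 (le_of_lt (hτpos n))) one_pos)
      rw [h1]
      simp [idxF, hf2]
    · rcases le_or_gt r T with hrT | hrT
      · rw [hclid r ⟨le_of_lt h0, hrT⟩]
      · have h1 : clampF T r = T := by
          rw [clampF, max_eq_left (le_of_lt h0)]
          exact min_eq_right (le_of_lt hrT)
        rw [h1]
        have hN1 : idxF (N n) (τ n) T = N n :=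
          le_antisymm (hidx_leN n T) (hidx_ge n (N n) T le_rfl (hNτT n))
        have hN2 : idxF (N n) (τ n) r = N n :=
          le_antisymm (hidx_leN n r) (hidx_ge n (N n) r le_rfl (le_trans (hNτT n) (le_of_lt hrT)))
        rw [hN1, hN2]
  -- measurability and integrability of the interpolated integrand
  have hXmeas : ∀ n, Measurable (Xd n) := by
    intro n
    have h1 : Measurable fun r : ℝ => ⌊r / τ n⌋₊ :=
      Nat.measurable_floor.comp (measurable_id.div_const (τ n))
    have h2 : Measurable fun i : ℕ => pts n (min (N n) i) := measurable_from_top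
    have : Measurable fun r : ℝ => pts n (min (N n) ⌊r / τ n⌋₊) := h2.comp h1
    simpa only [hXdef, idxF] using this
  have hIntegrand_meas : ∀ n, Measurable fun r => EtC r (Xd n r) :=
    fun n => hEtCcont.measurable.comp (measurable_id.prodMk (hXmeas n))
  have hBnd : ∀ n r, |EtC r (Xd n r)| ≤ lam * C := by
    intro n r
    have h1 : Xd n r = Xd n (clampF T r) := by
      simp only [hXdef]
      rw [hidx_cl n r]
    have h2 : E (clampF T r) (Xd n r) ≤ C := by
      rw [h1]; exact hB2 n (clampF T r) (hclmem r)
    calc |EtC r (Xd n r)| = |Et (clampF T r) (Xd n r)| := by rw [hEtCdef]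
    _ ≤ lam * E (clampF T r) (Xd n r) := hEbound _ (hclmem r) _
    _ ≤ lam * C := mul_le_mul_of_nonneg_left h2 hlam
  have hInt : ∀ n (a b : ℝ), IntervalIntegrable (fun r => EtC r (Xd n r)) volume a b := by
    intro n a b
    refine (intervalIntegrable_const (c := lam * C)).mono_fun
      ((hIntegrand_meas n).aestronglyMeasurable.restrict) ?_
    refine ae_of_all _ fun r => ?_
    simp only [Real.norm_eq_abs]
    exact le_trans (hBnd n r) (le_abs_self _)
  -- the fundamental discrete energy estimate, summed over steps
  have hstepsum : ∀ n (k : ℕ), ∀ j : ℕ, k ≤ j → j ≤ N n →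
      E ((j:ℝ)*τ n) (pts n j) - E ((k:ℝ)*τ n) (pts n k) ≤
        (∫ r in ((k:ℝ)*τ n)..((j:ℝ)*τ n), EtC r (Xd n r))
          - ∑ i ∈ Finset.Ico k j, Ψ (pts n (i+1) - pts n i) := by
    intro n k j hkj
    induction j, hkj using Nat.le_induction with
    | base => intro _; simp
    | succ j hkj ih =>
      intro hjN
      have ihh := ih (by omega)
      have hτn := hτpos n
      have hcast : ((j+1:ℕ):ℝ) = (j:ℝ) + 1 := by push_cast; ring
      have h0j : (0:ℝ) ≤ (j:ℝ) * τ n := mul_nonneg (Nat.cast_nonneg j) (le_of_lt hτn)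
      have hjj1 : (j:ℝ)*τ n ≤ ((j:ℝ)+1)*τ n := by nlinarith
      have hj1T : ((j:ℝ)+1)*τ n ≤ T := by
        have hc : ((j:ℝ)+1) ≤ (N n : ℝ) := by exact_mod_cast hjN
        calc ((j:ℝ)+1) * τ n ≤ (N n : ℝ) * τ n := mul_le_mul_of_nonneg_right hc (le_of_lt hτn)
        _ ≤ T := hNτT n
      have hmin := ((hsol n).2 (j+1) (by omega) hjN).2 (pts n j) (by simp [le_of_lt hε])
      simp only [Nat.add_sub_cancel, sub_self, hΨ0, add_zero] at hmin
      rw [hcast] at hmin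
      have hFTCj := hFTC (pts n j) ((j:ℝ)*τ n) (((j:ℝ)+1)*τ n) h0j hjj1 hj1T
      have hcongr : (∫ r in ((j:ℝ)*τ n)..(((j:ℝ)+1)*τ n), EtC r (Xd n r))
          = ∫ r in ((j:ℝ)*τ n)..(((j:ℝ)+1)*τ n), Et r (pts n j) := by
        apply intervalIntegral.integral_congr_ae
        have hae : ∀ᵐ r : ℝ, r ≠ ((j:ℝ)+1)*τ n := by
          refine ae_iff.mpr ?_
          simp
        filter_upwards [hae] with r hr hrmem
        rw [Set.uIoc_of_le hjj1] at hrmem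
        have hlt : r < ((j:ℝ)+1)*τ n := lt_of_le_of_ne hrmem.2 hr
        have hidxr : idxF (N n) (τ n) r = j := hidx_interior n j hjN r hrmem.1 hlt
        have hrIcc : r ∈ Set.Icc (0:ℝ) T :=
          ⟨le_trans h0j (le_of_lt hrmem.1), le_trans (le_of_lt hlt) hj1T⟩
        simp only [hEtCdef, hXdef, hidxr, hclid r hrIcc]
      have hadd := intervalIntegral.integral_add_adjacent_intervals
        (hInt n ((k:ℝ)*τ n) ((j:ℝ)*τ n)) (hInt n ((j:ℝ)*τ n) (((j:ℝ)+1)*τ n))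
      rw [Finset.sum_Ico_succ_top hkj, hcast]
      linarith [hFTCj, hcongr, hadd, ihh, hmin]
  -- the target bound
  set G : ℝ := (∫ r in s..t, EtC r (xe r)) + E s (xe s) - E t (xe t) with hGdef
  -- every partition sum for the limit curve is bounded by G
  have hkey : ∀ S ∈ dissSums Ψ xe s t, S ≤ G := by
    rintro S ⟨M, σ, hσmono, hσ0, hσlast, rfl⟩
    have hσmem : ∀ j : Fin (M+1), σ j ∈ Set.Icc s t := fun j =>
      ⟨hσ0 ▸ hσmono.monotone (Fin.zero_le j), hσlast ▸ hσmono.monotone (Fin.le_last j)⟩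
    have hσIccT : ∀ j : Fin (M+1), σ j ∈ Set.Icc (0:ℝ) T := fun j =>
      ⟨le_trans hs (hσmem j).1, le_trans (hσmem j).2 ht⟩
    have hpern : ∀ n, (∑ j : Fin M, Ψ (Xd n (σ j.succ) - Xd n (σ j.castSucc)))
        ≤ (∫ r in s..t, EtC r (Xd n r)) + E s (Xd n s) - E t (Xd n t) := by
      intro n
      have hτn := hτpos n
      set k := idxF (N n) (τ n) s with hkdef
      set m := idxF (N n) (τ n) t with hmdef
      have hkm : k ≤ m := hidx_mono n hst
      have hmN : m ≤ N n := hidx_leN n t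
      have hks : (k:ℝ)*τ n ≤ s := hidx_mul_le n s hs
      have hmt : (m:ℝ)*τ n ≤ t := hidx_mul_le n t (le_trans hs hst)
      have h0k : (0:ℝ) ≤ (k:ℝ)*τ n := mul_nonneg (Nat.cast_nonneg k) (le_of_lt hτn)
      have h0m : (0:ℝ) ≤ (m:ℝ)*τ n := mul_nonneg (Nat.cast_nonneg m) (le_of_lt hτn)
      -- the partition sum is dominated by the sum over grid increments
      have hmerge : (∑ j : Fin M, Ψ (Xd n (σ j.succ) - Xd n (σ j.castSucc)))
          ≤ ∑ i ∈ Finset.Ico k m, Ψ (pts n (i+1) - pts n i) := by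
        set g : ℕ → ℕ :=
          fun j => idxF (N n) (τ n) (σ (⟨min j M, by omega⟩ : Fin (M+1))) with hgdef
        have hgmono : Monotone g := by
          intro a b hab
          exact hidx_mono n (hσmono.monotone (Fin.mk_le_mk.mpr (min_le_min hab le_rfl)))
        have hg0 : g 0 = k := by
          have : (⟨min 0 M, by omega⟩ : Fin (M+1)) = 0 := by
            ext; simp
          rw [hgdef]
          simp only [this, hσ0, hkdef]
        have hgM : g M = m := by
          have : (⟨min M M, by omega⟩ : Fin (M+1)) = Fin.last M := by
            ext; simp
          rw [hgdef]
          simp only [this, hσlast, hmdef]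
        have hmg := psi_merge' hsub hΨ0 (pts n) g hgmono M
        rw [hg0, hgM] at hmg
        refine le_trans (le_of_eq ?_) hmg
        rw [Finset.sum_range]
        refine Finset.sum_congr rfl fun j _ => ?_
        have h1 : (⟨min ((j:ℕ)+1) M, by omega⟩ : Fin (M+1)) = j.succ := by
          ext
          simp [Nat.min_eq_left (Nat.succ_le_of_lt j.isLt)]
        have h2 : (⟨min (j:ℕ) M, by omega⟩ : Fin (M+1)) = j.castSucc := by
          ext
          simp [Nat.min_eq_left (le_of_lt j.isLt)]
        rw [hgdef]
        simp only [h1, h2, hXdef]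
      have hss := hstepsum n k m hkm hmN
      have h3 : (∫ r in ((k:ℝ)*τ n)..s, EtC r (Xd n r))
          = E s (pts n k) - E ((k:ℝ)*τ n) (pts n k) := by
        have heq : ∀ r ∈ Set.uIcc ((k:ℝ)*τ n) s, EtC r (Xd n r) = Et r (pts n k) := by
          intro r hr
          rw [Set.uIcc_of_le hks] at hr
          have hidxr : idxF (N n) (τ n) r = k := by
            rw [hkdef]
            exact hidx_eq n r s (by rw [← hkdef]; exact hr.1) hr.2
          have hrIcc : r ∈ Set.Icc (0:ℝ) T := ⟨le_trans h0k hr.1, le_trans hr.2 hsT⟩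
          simp only [hEtCdef, hXdef, hidxr, hclid r hrIcc]
        rw [intervalIntegral.integral_congr heq, hFTC (pts n k) _ s h0k hks hsT]
      have h4 : (∫ r in ((m:ℝ)*τ n)..t, EtC r (Xd n r))
          = E t (pts n m) - E ((m:ℝ)*τ n) (pts n m) := by
        have heq : ∀ r ∈ Set.uIcc ((m:ℝ)*τ n) t, EtC r (Xd n r) = Et r (pts n m) := by
          intro r hr
          rw [Set.uIcc_of_le hmt] at hr
          have hidxr : idxF (N n) (τ n) r = m := by
            rw [hmdef]
            exact hidx_eq n r t (by rw [← hmdef]; exact hr.1) hr.2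
          have hrIcc : r ∈ Set.Icc (0:ℝ) T := ⟨le_trans h0m hr.1, le_trans hr.2 ht⟩
          simp only [hEtCdef, hXdef, hidxr, hclid r hrIcc]
        rw [intervalIntegral.integral_congr heq, hFTC (pts n m) _ t h0m hmt ht]
      have hadd1 := intervalIntegral.integral_add_adjacent_intervals
        (hInt n ((k:ℝ)*τ n) s) (hInt n s t)
      have hadd2 := intervalIntegral.integral_add_adjacent_intervals
        (hInt n ((k:ℝ)*τ n) ((m:ℝ)*τ n)) (hInt n ((m:ℝ)*τ n) t)
      have hXs : Xd n s = pts n k := by simp only [hXdef, ← hkdef]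
      have hXt : Xd n t = pts n m := by simp only [hXdef, ← hmdef]
      rw [hXs, hXt]
      linarith [hmerge, hss, h3, h4, hadd1, hadd2]
    -- limits as n → ∞
    have hlim1 : Tendsto (fun n => ∑ j : Fin M, Ψ (Xd n (σ j.succ) - Xd n (σ j.castSucc)))
        atTop (𝓝 (∑ j : Fin M, Ψ (xe (σ j.succ) - xe (σ j.castSucc)))) := by
      refine tendsto_finset_sum _ fun j _ => ?_
      exact (hΨcont.tendsto _).comp
        ((hconv' _ (hσIccT j.succ)).sub (hconv' _ (hσIccT j.castSucc)))
    have hlims : Tendsto (fun n => E s (Xd n s)) atTop (𝓝 (E s (xe s))) :=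
      Filter.Tendsto.comp (hDE s ⟨hs, hsT⟩ (xe s)).continuousAt (hconv' s ⟨hs, hsT⟩)
    have hlimt : Tendsto (fun n => E t (Xd n t)) atTop (𝓝 (E t (xe t))) :=
      Filter.Tendsto.comp (hDE t ⟨le_trans hs hst, ht⟩ (xe t)).continuousAt
        (hconv' t ⟨le_trans hs hst, ht⟩)
    have hlimI : Tendsto (fun n => ∫ r in s..t, EtC r (Xd n r)) atTop
        (𝓝 (∫ r in s..t, EtC r (xe r))) := by
      apply intervalIntegral.tendsto_integral_filter_of_dominated_convergence
        (bound := fun _ => lam * C)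
      · exact Eventually.of_forall fun n => ((hIntegrand_meas n).aestronglyMeasurable).restrict
      · refine Eventually.of_forall fun n => ae_of_all _ fun r _ => ?_
        rw [Real.norm_eq_abs]
        exact hBnd n r
      · exact intervalIntegrable_const
      · refine ae_of_all _ fun r hr => ?_
        rw [Set.uIoc_of_le hst] at hr
        have hrIcc : r ∈ Set.Icc (0:ℝ) T := ⟨le_trans hs (le_of_lt hr.1), le_trans hr.2 ht⟩
        have h1 : Tendsto (fun n => (r, Xd n r)) atTop (𝓝 (r, xe r)) := by
          rw [nhds_prod_eq]
          exact tendsto_const_nhds.prodMk (hconv' r hrIcc)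
        exact (hEtCcont.tendsto _).comp h1
    have hlimA : Tendsto
        (fun n => (∫ r in s..t, EtC r (Xd n r)) + E s (Xd n s) - E t (Xd n t))
        atTop (𝓝 G) := by
      rw [hGdef]
      exact (hlimI.add hlims).sub hlimt
    exact le_of_tendsto_of_tendsto' hlim1 hlimA hpern
  -- the set of partition sums is nonempty
  have hne : (dissSums Ψ xe s t).Nonempty := by
    rcases eq_or_lt_of_le hst with heq | hlt
    · refine ⟨0, 0, fun _ => s, ?_, rfl, heq, (Fin.sum_univ_zero _).symm⟩
      intro a b hab
      have ha := a.2
      have hb := b.2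
      have hab' := Fin.lt_def.mp hab
      omega
    · refine ⟨Ψ (xe t - xe s), 1, ![s, t], ?_, rfl, rfl, by rw [Fin.sum_univ_one]; rfl⟩
      rw [Fin.strictMono_iff_lt_succ]
      intro i
      rw [Fin.fin_one_eq_zero i]
      exact hlt
  have hdiss_le : dissTV Ψ xe s t ≤ G := csSup_le hne hkey
  have hEq : (∫ r in s..t, EtC r (xe r)) = ∫ r in s..t, Et r (xe r) := by
    apply intervalIntegral.integral_congr
    intro r hr
    rw [Set.uIcc_of_le hst] at hr
    exact hEtCeq r ⟨le_trans hs hr.1, le_trans hr.2 ht⟩ (xe r)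
  rw [hGdef, hEq] at hdiss_le
  linarith [hdiss_le]
end
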